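/- In Max M₂(ℂ), let L = {(a a; b b) : a, b ∈ ℂ} (matrices with equal columns), R = {(c d; c d) : c, d ∈ ℂ} (matrices with equal rows), E the one-dimensional subspace spanned by the identity matrix (1 0; 0 1), and F the one-dimensional subspace spanned by (1 0; 0 −1). Then L∘E∘R = M₂(ℂ) (the top of Max M₂(ℂ)) while L∘F∘R = {0} (the bottom of Max M₂(ℂ)). -/
import Mathlib


abbrev M2C := Matrix (Fin 2) (Fin 2) ℂ

/-- The quantale multiplication of `Max M₂(ℂ)`: `M∘N` is the closure of the linear span of
the products (all subspaces of `M₂(ℂ)` are closed). -/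
noncomputable def qmul (M N : Submodule ℂ M2C) : Submodule ℂ M2C :=
  (M * N).topologicalClosure

/-- The subspace `L = {(a a; b b)}` of matrices with equal columns. -/
noncomputable def eqColsSub : Submodule ℂ M2C where
  carrier := {m | m 0 0 = m 0 1 ∧ m 1 0 = m 1 1}
  add_mem' := by
    intro a b ha hb
    simp only [Set.mem_setOf_eq, Matrix.add_apply] at *
    rw [ha.1, ha.2, hb.1, hb.2]
    simp
  zero_mem' := ⟨rfl, rfl⟩
  smul_mem' := by
    intro c m hm
    simp only [Set.mem_setOf_eq, Matrix.smul_apply] at *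
    rw [hm.1, hm.2]
    simp

/-- The subspace `R = {(c d; c d)}` of matrices with equal rows. -/
noncomputable def eqRowsSub : Submodule ℂ M2C where
  carrier := {m | m 0 0 = m 1 0 ∧ m 0 1 = m 1 1}
  add_mem' := by
    intro a b ha hb
    simp only [Set.mem_setOf_eq, Matrix.add_apply] at *
    rw [ha.1, ha.2, hb.1, hb.2]
    simp
  zero_mem' := ⟨rfl, rfl⟩
  smul_mem' := by
    intro c m hm
    simp only [Set.mem_setOf_eq, Matrix.smul_apply] at *
    rw [hm.1, hm.2]
    simp

lemma mem_eqColsSub {m : M2C} : m ∈ eqColsSub ↔ m 0 0 = m 0 1 ∧ m 1 0 = m 1 1 := Iff.rfl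

lemma mem_eqRowsSub {m : M2C} : m ∈ eqRowsSub ↔ m 0 0 = m 1 0 ∧ m 0 1 = m 1 1 := Iff.rfl

lemma qmul_eq (M N : Submodule ℂ M2C) : qmul M N = M * N :=
  (Submodule.closed_of_finiteDimensional (M * N)).submodule_topologicalClosure_eq

/-- In `Max M₂(ℂ)`, with `L` the matrices with equal columns, `R` the matrices
with equal rows, `E = ℂ·(1 0; 0 1)` and `F = ℂ·(1 0; 0 -1)`, one has `L∘E∘R = M₂(ℂ)` (the
top of `Max M₂(ℂ)`) while `L∘F∘R = {0}` (the bottom of `Max M₂(ℂ)`). -/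
theorem maxM2C_LER_top_LFR_bot :
    qmul (qmul eqColsSub (Submodule.span ℂ {(1 : M2C)})) eqRowsSub = ⊤ ∧
    qmul (qmul eqColsSub (Submodule.span ℂ {(!![1, 0; 0, -1] : M2C)})) eqRowsSub = ⊥ := by
  rw [qmul_eq, qmul_eq, qmul_eq, qmul_eq]
  constructor
  · -- top part
    rw [eq_top_iff]
    intro m _
    have he : (1 : M2C) ∈ Submodule.span ℂ {(1 : M2C)} := Submodule.mem_span_singleton_self _
    have hc0 : (!![1, 1; 0, 0] : M2C) ∈ eqColsSub := mem_eqColsSub.mpr (by norm_num)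
    have hc1 : (!![0, 0; 1, 1] : M2C) ∈ eqColsSub := mem_eqColsSub.mpr (by norm_num)
    have hr0 : (!![1, 0; 1, 0] : M2C) ∈ eqRowsSub := mem_eqRowsSub.mpr (by norm_num)
    have hr1 : (!![0, 1; 0, 1] : M2C) ∈ eqRowsSub := mem_eqRowsSub.mpr (by norm_num)
    have key : ∀ (c r : M2C), c ∈ eqColsSub → r ∈ eqRowsSub →
        c * r ∈ eqColsSub * Submodule.span ℂ {(1 : M2C)} * eqRowsSub := by
      intro c r hc hr
      have : c * r = (c * 1) * r := by rw [mul_one]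
      rw [this]
      exact Submodule.mul_mem_mul (Submodule.mul_mem_mul hc he) hr
    have h00 := key _ _ hc0 hr0
    have h01 := key _ _ hc0 hr1
    have h10 := key _ _ hc1 hr0
    have h11 := key _ _ hc1 hr1
    have hm : m = ((1:ℂ)/2 * m 0 0) • (!![1,1;0,0] * !![1,0;1,0])
        + ((1:ℂ)/2 * m 0 1) • (!![1,1;0,0] * !![0,1;0,1])
        + ((1:ℂ)/2 * m 1 0) • (!![0,0;1,1] * !![1,0;1,0])
        + ((1:ℂ)/2 * m 1 1) • (!![0,0;1,1] * !![0,1;0,1]) := by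
      ext i j
      fin_cases i <;> fin_cases j <;>
        simp [Matrix.mul_apply, Fin.sum_univ_two] <;> ring
    rw [hm]
    exact add_mem (add_mem (add_mem (Submodule.smul_mem _ _ h00) (Submodule.smul_mem _ _ h01))
      (Submodule.smul_mem _ _ h10)) (Submodule.smul_mem _ _ h11)
  · -- bot part
    rw [eq_bot_iff]
    apply Submodule.mul_le.mpr
    intro y hy r hr
    rw [mem_eqRowsSub] at hr
    have hP : y 0 0 = -(y 0 1) ∧ y 1 0 = -(y 1 1) := by
      refine Submodule.mul_induction_on hy ?_ ?_
      · intro c hc n hn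
        rw [mem_eqColsSub] at hc
        obtain ⟨z, rfl⟩ := Submodule.mem_span_singleton.mp hn
        constructor <;>
          · simp only [Matrix.mul_apply, Fin.sum_univ_two, Matrix.smul_apply,
              smul_eq_mul, show (!![1,0;0,(-1:ℂ)]) 0 0 = 1 from rfl,
              show (!![1,0;0,(-1:ℂ)]) 0 1 = 0 from rfl,
              show (!![1,0;0,(-1:ℂ)]) 1 0 = 0 from rfl,
              show (!![1,0;0,(-1:ℂ)]) 1 1 = -1 from rfl]
            first
              | linear_combination z * hc.1
              | linear_combination z * hc.2
      · intro a b ha hb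
        constructor <;> simp [Matrix.add_apply, ha.1, ha.2, hb.1, hb.2] <;> ring
    have : y * r = 0 := by
      ext i j
      fin_cases i <;> fin_cases j <;>
        simp [Matrix.mul_apply, Fin.sum_univ_two, hP.1, hP.2, hr.1, hr.2]
    rw [this]
    exact Submodule.zero_mem ⊥
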